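/- For all bimoulds A, B, C such that A(∅) = 0, one has swamu(mu(A,B), C) = mu(swamu(A,C), B). -/
import Mathlib


/-- A bimould: a function assigning to every finite sequence of pairs `(u, v)` of
elements of `K` an element of `R`. -/
abbrev Bimould (K R : Type*) := List (K × K) → R

variable {K R : Type*} [CommRing K] [CommRing R]

/-- The (non-commutative) mould product `mu`:
`mu(A,B)(w) = Σ_{w = a·b} A(a) B(b)` over all prefix/suffix decompositions of `w`. -/
def mu (A B : Bimould K R) : Bimould K R :=
  fun w => ∑ i ∈ Finset.range (w.length + 1), A (w.take i) * B (w.drop i)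

/-- The sequence transformation underlying `swap`: for `w = ((u_1,v_1),…,(u_r,v_r))` it
returns `((v_r, u_1+⋯+u_r), (v_{r-1}-v_r, u_1+⋯+u_{r-1}), …, (v_1-v_2, u_1))`. -/
def swapSeq (w : List (K × K)) : List (K × K) :=
  List.ofFn fun i : Fin w.length =>
    ((w.getD (w.length - 1 - (i : ℕ)) (0, 0)).2 - (w.getD (w.length - (i : ℕ)) (0, 0)).2,
      ((w.take (w.length - (i : ℕ))).map Prod.fst).sum)

/-- The involution `swap`. -/
def swap (A : Bimould K R) : Bimould K R := fun w => A (swapSeq w)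

/-- The involution `anti`, reversing the sequence of letters. -/
def anti (A : Bimould K R) : Bimould K R := fun w => A w.reverse

/-- `swamu`, the `swap`-conjugation of `mu`. -/
def swamu (A B : Bimould K R) : Bimould K R := swap (mu (swap A) (swap B))

/-- `answamu`, the `swap ∘ anti`-conjugation of `mu`. -/
def answamu (A B : Bimould K R) : Bimould K R :=
  anti (swap (mu (swap (anti A)) (swap (anti B))))

def uflex (c : K) : List (K × K) → List (K × K)
  | [] => []
  | (u, v) :: t => (c + u, v) :: t

def vsub (c : K) (l : List (K × K)) : List (K × K) := l.map fun p => (p.1, p.2 - c)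

def Sf (l : List (K × K)) : K := (l.map Prod.fst).sum

@[simp] lemma length_swapSeq (w : List (K × K)) : (swapSeq w).length = w.length := by
  simp [swapSeq]

lemma swapSeq_getElem (w : List (K × K)) (j : ℕ) (hj : j < w.length) :
    (swapSeq w)[j]'(by simpa using hj) =
      ((w.getD (w.length - 1 - j) (0,0)).2 - (w.getD (w.length - j) (0,0)).2,
        Sf (w.take (w.length - j))) := by
  simp [swapSeq, Sf]

lemma Sf_take (l : List (K × K)) : ∀ m, m ≤ l.length →
    Sf (l.take m) = ∑ k ∈ Finset.range m, (l.getD k (0,0)).1 := by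
  intro m
  induction m with
  | zero => simp [Sf]
  | succ m ih =>
    intro h
    have hm : m < l.length := by omega
    rw [Finset.sum_range_succ, ← ih (by omega)]
    have hm' : m < (l.map Prod.fst).length := by simpa using hm
    simp only [Sf, List.map_take]
    rw [List.sum_take_succ _ m hm', List.getElem_map, List.getD_eq_getElem l (0,0) hm]

lemma telescope (f : ℕ → K) : ∀ (M p : ℕ), M ≤ p →
    ∑ k ∈ Finset.range M, (f (p - 1 - k) - f (p - k)) = f (p - M) - f p := by
  intro M
  induction M with
  | zero => simp
  | succ M ih =>
    intro p h
    rw [Finset.sum_range_succ, ih p (by omega)]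
    have h1 : p - 1 - M = p - (M + 1) := by omega
    rw [h1]; ring

lemma swapSeq_getD (w : List (K × K)) (j : ℕ) (hj : j < w.length) :
    (swapSeq w).getD j (0,0) =
      ((w.getD (w.length - 1 - j) (0,0)).2 - (w.getD (w.length - j) (0,0)).2,
        Sf (w.take (w.length - j))) := by
  rw [List.getD_eq_getElem _ _ (by simpa using hj), swapSeq_getElem w j hj]

lemma uflex_length (c : K) (l : List (K × K)) : (uflex c l).length = l.length := by
  cases l with
  | nil => rfl
  | cons h t => cases h; rfl

lemma uflex_getElem (c : K) (l : List (K × K)) (j : ℕ) (h : j < l.length) :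
    (uflex c l)[j]'(by rw [uflex_length]; exact h) =
      if j = 0 then (c + (l[j]'h).1, (l[j]'h).2) else l[j]'h := by
  cases l with
  | nil => simp at h
  | cons p t =>
    cases p
    cases j <;> simp [uflex]

lemma Sf_take_succ (w : List (K × K)) (m : ℕ) (hm : m < w.length) :
    Sf (w.take (m+1)) = Sf (w.take m) + (w.getD m (0,0)).1 := by
  rw [Sf_take _ _ (by omega), Sf_take _ _ (by omega), Finset.sum_range_succ]

lemma sum_fst_swapSeq_take (w : List (K × K)) (m : ℕ) (hm : m ≤ w.length) :
    Sf ((swapSeq w).take m) = (w.getD (w.length - m) (0,0)).2 := by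
  rw [Sf_take _ _ (by simpa using hm)]
  have e : ∀ k ∈ Finset.range m, ((swapSeq w).getD k (0,0)).1
      = (w.getD (w.length - 1 - k) (0,0)).2 - (w.getD (w.length - k) (0,0)).2 := fun k hk => by
    rw [swapSeq_getD _ k (by simp at hk; omega)]
  rw [Finset.sum_congr rfl e, telescope (fun n => (w.getD n (0,0)).2) m w.length hm, List.getD_eq_default _ _ (le_refl _)]
  simp

lemma getD_take_lt (l : List (K × K)) (i k : ℕ) (h : k < i) (hk : k < l.length) :
    (l.take i).getD k (0,0) = l.getD k (0,0) := by
  rw [List.getD_eq_getElem _ _ (by (try simp only [length_swapSeq, List.length_drop, List.length_take]); omega), List.getD_eq_getElem _ _ hk,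
    List.getElem_take]

lemma swapSeq_take (w : List (K × K)) (i : ℕ) (hi : i ≤ w.length) :
    swapSeq ((swapSeq w).take i)
      = uflex (Sf (w.take (w.length - i))) (w.drop (w.length - i)) := by
  have hlen : ((swapSeq w).take i).length = i := by simp [hi]
  apply List.ext_getElem (by simp [uflex_length, hi]; omega)
  intro j h1 h2
  have hj : j < i := by simpa [hlen] using h1
  have hdl : j < (w.drop (w.length - i)).length := by (try simp only [length_swapSeq, List.length_drop, List.length_take]); omega
  rw [swapSeq_getElem _ j (by rw [hlen]; exact hj), uflex_getElem _ _ j hdl, hlen]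
  have hst : ∀ m, m ≤ i → ((swapSeq w).take i).take m = (swapSeq w).take m := by
    intro m hm; rw [List.take_take, min_eq_left hm]
  rcases Nat.eq_zero_or_pos j with rfl | hj1
  · simp only [if_pos rfl, Nat.sub_zero]
    rw [List.getD_eq_default _ _ (le_of_eq hlen), hst i le_rfl,
      sum_fst_swapSeq_take _ i hi,
      getD_take_lt _ _ _ (by omega) (by (try simp only [length_swapSeq, List.length_drop, List.length_take]); omega),
      swapSeq_getD _ _ (by (try simp only [length_swapSeq, List.length_drop, List.length_take]); omega)]
    rw [List.getElem_drop]
    have e1 : w.length - (i - 1) = (w.length - i) + 1 := by omega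
    rw [e1, Sf_take_succ _ _ (by omega),
      List.getD_eq_getElem _ _ (show w.length - i < w.length by omega)]
    simp [add_comm]
  · have hj0 : ¬ (j = 0) := by omega
    simp only [if_neg hj0]
    rw [getD_take_lt _ _ _ (by omega) (by (try simp only [length_swapSeq, List.length_drop, List.length_take]); omega),
      getD_take_lt _ _ _ (by omega) (by (try simp only [length_swapSeq, List.length_drop, List.length_take]); omega),
      swapSeq_getD _ _ (by omega), swapSeq_getD _ _ (by omega),
      hst (i - j) (by omega), sum_fst_swapSeq_take _ _ (by omega)]
    rw [List.getElem_drop]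
    have e1 : w.length - (i - 1 - j) = (w.length - (i - j)) + 1 := by omega
    have e2 : w.length - (i - j) = w.length - i + j := by omega
    rw [e1, e2, Sf_take_succ _ _ (by omega),
      List.getD_eq_getElem _ _ (show w.length - i + j < w.length by omega)]
    simp

lemma getD_drop' (l : List (K × K)) (i k : ℕ) :
    (l.drop i).getD k (0,0) = l.getD (i + k) (0,0) := by
  rcases lt_or_ge (i + k) l.length with h | h
  · rw [List.getD_eq_getElem _ _ (by rw [List.length_drop]; omega),
      List.getD_eq_getElem _ _ h, List.getElem_drop]
  · rw [List.getD_eq_default _ _ (by rw [List.length_drop]; omega),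
      List.getD_eq_default _ _ h]

@[simp] lemma vsub_length (c : K) (l : List (K × K)) : (vsub c l).length = l.length := by
  simp [vsub]

lemma swapSeq_drop (w : List (K × K)) (i : ℕ) (hi : i ≤ w.length) :
    swapSeq ((swapSeq w).drop i)
      = vsub ((w.getD (w.length - i) (0,0)).2) (w.take (w.length - i)) := by
  have hlen : ((swapSeq w).drop i).length = w.length - i := by simp
  apply List.ext_getElem (by simp only [length_swapSeq, List.length_drop,
    List.length_take, vsub_length]; omega)
  intro j h1 h2
  have hj : j < w.length - i := by simpa [hlen] using h1
  rw [swapSeq_getElem _ j (by rw [hlen]; exact hj), hlen]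
  -- RHS element
  have hjw : j < w.length := by omega
  have hrhs : (vsub ((w.getD (w.length - i) (0,0)).2) (w.take (w.length - i)))[j]'h2
      = ((w[j]'hjw).1, (w[j]'hjw).2 - (w.getD (w.length - i) (0,0)).2) := by
    simp [vsub]
  rw [hrhs]
  -- second components: sum over the dropped part telescopes
  have hsnd : Sf (((swapSeq w).drop i).take (w.length - i - j))
      = (w.getD j (0,0)).2 - (w.getD (w.length - i) (0,0)).2 := by
    rw [Sf_take _ _ (by rw [hlen]; omega)]
    have e : ∀ k ∈ Finset.range (w.length - i - j),
        (((swapSeq w).drop i).getD k (0,0)).1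
          = ((fun n => (w.getD n (0,0)).2) ((w.length - i) - 1 - k)
            - (fun n => (w.getD n (0,0)).2) ((w.length - i) - k)) := by
      intro k hk
      simp only [Finset.mem_range] at hk
      rw [getD_drop', swapSeq_getD _ _ (by omega)]
      have e1 : w.length - 1 - (i + k) = w.length - i - 1 - k := by omega
      have e2 : w.length - (i + k) = w.length - i - k := by omega
      simp only [e1, e2]
    rw [Finset.sum_congr rfl e,
      telescope (fun n => (w.getD n (0,0)).2) _ _ (by omega)]
    have e3 : w.length - i - (w.length - i - j) = j := by omega
    rw [e3]
  -- first components
  rcases Nat.eq_zero_or_pos j with rfl | hj1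
  · have e1 : i + (w.length - i - 1 - 0) = w.length - 1 := by omega
    have e2 : i + (w.length - i - 0) = w.length := by omega
    rw [getD_drop', getD_drop', e1, e2,
      List.getD_eq_default _ _ (show (swapSeq w).length ≤ w.length by simp),
      swapSeq_getD _ _ (show w.length - 1 < w.length by omega)]
    have e4 : w.length - (w.length - 1) = 1 := by omega
    rw [e4, hsnd]
    have e5 : Sf (w.take 1) = (w.getD 0 (0,0)).1 := by
      have := Sf_take_succ w 0 (by omega)
      simpa [Sf] using this
    simp [e5, List.getD_eq_getElem _ _ hjw, List.getElem?_eq_getElem hjw]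
  · have e1 : i + (w.length - i - 1 - j) = w.length - 1 - j := by omega
    have e2 : i + (w.length - i - j) = w.length - j := by omega
    rw [getD_drop', getD_drop', e1, e2,
      swapSeq_getD _ _ (show w.length - 1 - j < w.length by omega),
      swapSeq_getD _ _ (show w.length - j < w.length by omega)]
    have e3 : w.length - (w.length - 1 - j) = j + 1 := by omega
    have e4 : w.length - (w.length - j) = j := by omega
    rw [e3, e4, hsnd, Sf_take_succ _ _ (by omega)]
    simp [List.getD_eq_getElem _ _ hjw, List.getElem?_eq_getElem hjw]

lemma swamu_apply (A B : Bimould K R) (w : List (K × K)) :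
    swamu A B w = ∑ k ∈ Finset.range (w.length + 1),
      A (uflex (Sf (w.take k)) (w.drop k)) *
        B (vsub ((w.getD k (0,0)).2) (w.take k)) := by
  show mu (swap A) (swap B) (swapSeq w) = _
  unfold mu swap
  rw [length_swapSeq]
  calc (∑ i ∈ Finset.range (w.length + 1),
        A (swapSeq ((swapSeq w).take i)) * B (swapSeq ((swapSeq w).drop i)))
      = ∑ i ∈ Finset.range (w.length + 1),
          (fun k => A (uflex (Sf (w.take k)) (w.drop k)) *
            B (vsub ((w.getD k (0,0)).2) (w.take k))) (w.length + 1 - 1 - i) := by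
        apply Finset.sum_congr rfl
        intro i hi
        simp only [Finset.mem_range] at hi
        have hi' : i ≤ w.length := by omega
        have e : w.length + 1 - 1 - i = w.length - i := by omega
        rw [e, swapSeq_take _ _ hi', swapSeq_drop _ _ hi']
    _ = _ := Finset.sum_range_reflect
          (fun k => A (uflex (Sf (w.take k)) (w.drop k)) *
            B (vsub ((w.getD k (0,0)).2) (w.take k))) (w.length + 1)

lemma uflex_take (c : K) (l : List (K × K)) (j : ℕ) (hj : 1 ≤ j) :
    (uflex c l).take j = uflex c (l.take j) := by
  cases j with
  | zero => omega
  | succ k =>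
    cases l with
    | nil => simp [uflex]
    | cons p t => obtain ⟨u, v⟩ := p; simp [uflex]

lemma uflex_drop (c : K) (l : List (K × K)) (j : ℕ) (hj : 1 ≤ j) :
    (uflex c l).drop j = l.drop j := by
  cases j with
  | zero => omega
  | succ k =>
    cases l with
    | nil => simp [uflex]
    | cons p t => obtain ⟨u, v⟩ := p; simp [uflex]

/-- For bimoulds `A, B, C` with `A(∅) = 0`, `swamu(mu(A,B), C) = mu(swamu(A,C), B)`. -/
theorem stmt_6 (A B C : Bimould K R) (hA : A [] = 0) :
    swamu (mu A B) C = mu (swamu A C) B := by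
  funext w
  rw [swamu_apply]
  show _ = ∑ m ∈ Finset.range (w.length + 1), swamu A C (w.take m) * B (w.drop m)
  have hL : ∀ k ∈ Finset.range (w.length + 1),
      mu A B (uflex (Sf (w.take k)) (w.drop k)) * C (vsub ((w.getD k (0,0)).2) (w.take k))
        = ∑ j ∈ Finset.range (w.length - k + 1),
            A (uflex (Sf (w.take k)) ((w.drop k).take j)) * B (w.drop (k + j)) *
              C (vsub ((w.getD k (0,0)).2) (w.take k)) := by
    intro k hk
    simp only [Finset.mem_range] at hk
    show (∑ j ∈ Finset.range ((uflex (Sf (w.take k)) (w.drop k)).length + 1),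
        A ((uflex (Sf (w.take k)) (w.drop k)).take j) *
          B ((uflex (Sf (w.take k)) (w.drop k)).drop j)) * _ = _
    rw [uflex_length, List.length_drop, Finset.sum_mul]
    apply Finset.sum_congr rfl
    intro j hj
    simp only [Finset.mem_range] at hj
    rcases Nat.eq_zero_or_pos j with rfl | hj1
    · simp [uflex, hA]
    · rw [uflex_take _ _ _ hj1, uflex_drop _ _ _ hj1, List.drop_drop]
  rw [Finset.sum_congr rfl hL]
  have hR : ∀ m ∈ Finset.range (w.length + 1),
      swamu A C (w.take m) * B (w.drop m)
        = ∑ k ∈ Finset.range (m + 1),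
            A (uflex (Sf (w.take k)) ((w.drop k).take (m - k))) *
              C (vsub ((w.getD k (0,0)).2) (w.take k)) * B (w.drop m) := by
    intro m hm
    simp only [Finset.mem_range] at hm
    rw [swamu_apply, Finset.sum_mul, List.length_take, min_eq_left (by omega)]
    apply Finset.sum_congr rfl
    intro k hk
    simp only [Finset.mem_range] at hk
    rcases Nat.lt_or_ge k m with hkm | hkm
    · rw [List.take_take, min_eq_left (by omega), List.drop_take,
        getD_take_lt _ _ _ hkm (by omega)]
    · have hkm' : k = m := by omega
      subst hkm'
      simp [uflex, hA, List.drop_take]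
  rw [Finset.sum_congr rfl hR]
  rw [Finset.sum_sigma', Finset.sum_sigma']
  apply Finset.sum_nbij' (fun p => (⟨p.1 + p.2, p.1⟩ : Σ _ : ℕ, ℕ))
    (fun p => (⟨p.2, p.1 - p.2⟩ : Σ _ : ℕ, ℕ))
  · intro a ha
    obtain ⟨k, j⟩ := a
    simp only [Finset.mem_sigma, Finset.mem_range] at ha ⊢
    omega
  · intro a ha
    obtain ⟨m, k⟩ := a
    simp only [Finset.mem_sigma, Finset.mem_range] at ha ⊢
    omega
  · intro a ha
    obtain ⟨k, j⟩ := a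
    simp only [Finset.mem_sigma, Finset.mem_range] at ha
    dsimp only
    simp
  · intro a ha
    obtain ⟨m, k⟩ := a
    simp only [Finset.mem_sigma, Finset.mem_range] at ha
    dsimp only
    congr 1
    omega
  · intro a ha
    obtain ⟨k, j⟩ := a
    simp only [Finset.mem_sigma, Finset.mem_range] at ha
    dsimp only
    have e : k + j - k = j := by omega
    rw [e]
    ring
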